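/- Let S ⊆ ℝ₊ⁿ be compact and convex with 0 ∈ S, and Γ a proper closed convex cone containing at least one point with all coordinates positive. Then the support function of the Γ-hull agrees with that of S on Γ: φ_{Ŝ_Γ}(ξ) = φ_S(ξ) for every ξ ∈ Γ, where Ŝ_Γ = (S − Γ°) ∩ ℝ₊ⁿ. -/

import Mathlib

/-- Support function of `S`. -/
noncomputable def suppFn {n : ℕ} (S : Set (Fin n → ℝ)) (ξ : Fin n → ℝ) : ℝ :=
  sSup ((fun s => ∑ j, s j * ξ j) '' S)

/-- On `Γ`, the support function of the `Γ`-hull `Ŝ_Γ = (S − Γ°) ∩ ℝ₊ⁿ`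
agrees with that of `S`. -/
theorem stmt_13 {n : ℕ} (S : Set (Fin n → ℝ)) (hc : IsCompact S) (hconv : Convex ℝ S)
    (h0 : (0 : Fin n → ℝ) ∈ S) (hpos : ∀ s ∈ S, ∀ i, 0 ≤ s i)
    (Γ : Set (Fin n → ℝ)) (hΓc : IsClosed Γ) (hΓconv : Convex ℝ Γ)
    (hcone : ∀ t : ℝ, 0 ≤ t → ∀ ξ ∈ Γ, t • ξ ∈ Γ)
    (hproper : Γ ≠ Set.univ) (hpt : ∃ ξ ∈ Γ, ∀ j, 0 < ξ j)
    (ξ : Fin n → ℝ) (hξ : ξ ∈ Γ) :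
    suppFn ({x : Fin n → ℝ | ∃ s ∈ S, ∃ t : Fin n → ℝ,
        (∀ η ∈ Γ, 0 ≤ ∑ j, t j * η j) ∧ x = s - t} ∩ {x | ∀ i, 0 ≤ x i}) ξ =
      suppFn S ξ := by
  set f : (Fin n → ℝ) → ℝ := fun s => ∑ j, s j * ξ j with hf
  have hfc : Continuous f := by
    apply continuous_finset_sum
    intro j _
    exact (continuous_apply j).mul continuous_const
  have hbdd : BddAbove (f '' S) := (hc.image hfc).bddAbove
  have hSne : (f '' S).Nonempty := ⟨f 0, ⟨0, h0, rfl⟩⟩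
  set T : Set (Fin n → ℝ) := {x : Fin n → ℝ | ∃ s ∈ S, ∃ t : Fin n → ℝ,
      (∀ η ∈ Γ, 0 ≤ ∑ j, t j * η j) ∧ x = s - t} ∩ {x | ∀ i, 0 ≤ x i} with hT
  have hST : S ⊆ T := by
    intro x hx
    refine ⟨⟨x, hx, 0, ?_, by simp⟩, hpos x hx⟩
    intro η _
    simp
  have hub : ∀ y ∈ f '' T, y ≤ suppFn S ξ := by
    rintro y ⟨x, ⟨⟨s, hs, t, ht, hx⟩, _⟩, rfl⟩
    have h1 : f x = f s - f t := by
      subst hx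
      simp [hf, Finset.sum_sub_distrib, sub_mul]
    have h2 : 0 ≤ f t := ht ξ hξ
    have h3 : f s ≤ suppFn S ξ := le_csSup hbdd ⟨s, hs, rfl⟩
    linarith
  apply le_antisymm
  · exact csSup_le (hSne.mono (Set.image_mono (f := f) hST)) hub
  · exact csSup_le_csSup ⟨suppFn S ξ, hub⟩ hSne (Set.image_mono (f := f) hST)
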